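/- Let N, K ≥ 1 be integers, let g⁽¹⁾, …, g⁽ᴷ⁾ ∈ ℝᴺ, let σ⁽¹⁾, …, σ⁽ᴷ⁾ be positive reals, and set η⁽ᵏ⁾ = 1/(σ⁽¹⁾ + ⋯ + σ⁽ᵏ⁾). Let w⁽¹⁾ ∈ ℝᴺ and suppose that for each k = 1, …, K the vector w⁽ᵏ⁺¹⁾ is a global minimizer over ℝᴺ of the function w ↦ ⟨∑_{k'=1}^{k} g⁽ᵏ'⁾, w⟩ + (1/2) ∑_{k'=1}^{k} σ⁽ᵏ'⁾ ‖w − w⁽ᵏ'⁾‖². Then w⁽ᵏ⁺¹⁾ = w⁽ᵏ⁾ − η⁽ᵏ⁾ g⁽ᵏ⁾ for every k = 1, …, K; that is, the FTRL-Proximal iterates (without regularization) coincide with the online gradient descent iterates. -/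

import Mathlib

open Finset

private lemma stationary {E : Type*} [NormedAddCommGroup E] [InnerProductSpace ℝ E]
    (s : Finset ℕ) (g : ℕ → E) (σ : ℕ → ℝ)
    (hS : 0 < ∑ k ∈ s, σ k) (m : E) (wv : ℕ → E)
    (h : ∀ v : E, (inner ℝ (∑ k ∈ s, g k) m : ℝ)
        + (1 / 2) * ∑ k ∈ s, σ k * ‖m - wv k‖ ^ 2
      ≤ (inner ℝ (∑ k ∈ s, g k) v : ℝ)
        + (1 / 2) * ∑ k ∈ s, σ k * ‖v - wv k‖ ^ 2) :
    (∑ k ∈ s, g k) + ∑ k ∈ s, σ k • (m - wv k) = 0 := by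
  set G := ∑ k ∈ s, g k with hG
  set c := G + ∑ k ∈ s, σ k • (m - wv k) with hc
  set S := ∑ k ∈ s, σ k with hSdef
  set t : ℝ := 1 / S with ht
  have hcc : (‖c‖ ^ 2 : ℝ)
      = inner ℝ G c + ∑ k ∈ s, σ k * (inner ℝ (m - wv k) c : ℝ) := by
    rw [← real_inner_self_eq_norm_sq]
    simp only [hc, inner_add_left, sum_inner, real_inner_smul_left]
  have key := h (m - t • c)
  have hnorm : ∀ k ∈ s, ‖(m - t • c) - wv k‖ ^ 2
      = ‖m - wv k‖ ^ 2 - 2 * (t * inner ℝ (m - wv k) c) + t ^ 2 * ‖c‖ ^ 2 := by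
    intro k _
    have h1 : (m - t • c) - wv k = (m - wv k) - t • c := by abel
    rw [h1, norm_sub_sq_real, real_inner_smul_right, norm_smul]
    simp [mul_pow, sq_abs]
  have hsum0 : ∑ k ∈ s, σ k * ‖(m - t • c) - wv k‖ ^ 2
      = ∑ k ∈ s, σ k * (‖m - wv k‖ ^ 2 - 2 * (t * inner ℝ (m - wv k) c)
          + t ^ 2 * ‖c‖ ^ 2) :=
    Finset.sum_congr rfl fun k hk => by rw [hnorm k hk]
  rw [hsum0, inner_sub_right, real_inner_smul_right] at key
  have hsum : ∑ k ∈ s, σ k * (‖m - wv k‖ ^ 2 - 2 * (t * inner ℝ (m - wv k) c)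
        + t ^ 2 * ‖c‖ ^ 2)
      = (∑ k ∈ s, σ k * ‖m - wv k‖ ^ 2)
        - 2 * t * (∑ k ∈ s, σ k * (inner ℝ (m - wv k) c : ℝ))
        + t ^ 2 * ‖c‖ ^ 2 * S := by
    rw [hSdef]
    simp only [Finset.mul_sum]
    rw [← Finset.sum_sub_distrib, ← Finset.sum_add_distrib]
    exact Finset.sum_congr rfl fun k _ => by ring
  rw [hsum] at key
  -- rearrange: 0 ≤ -t * ‖c‖^2 + (t^2 * S / 2) * ‖c‖^2
  have key2 : 0 ≤ - t * ‖c‖ ^ 2 + (t ^ 2 * S / 2) * ‖c‖ ^ 2 := by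
    have h2 : - t * ‖c‖ ^ 2 + (t ^ 2 * S / 2) * ‖c‖ ^ 2
        = ((inner ℝ G m : ℝ) - t * inner ℝ G c
            + 1 / 2 * ((∑ k ∈ s, σ k * ‖m - wv k‖ ^ 2)
              - 2 * t * (∑ k ∈ s, σ k * (inner ℝ (m - wv k) c : ℝ))
              + t ^ 2 * ‖c‖ ^ 2 * S))
          - ((inner ℝ G m : ℝ) + 1 / 2 * ∑ k ∈ s, σ k * ‖m - wv k‖ ^ 2) := by
      rw [hcc]; ring
    rw [h2]
    linarith [key]
  have hSne : S ≠ 0 := ne_of_gt hS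
  have hval : - t * ‖c‖ ^ 2 + (t ^ 2 * S / 2) * ‖c‖ ^ 2 = - (1 / (2 * S)) * ‖c‖ ^ 2 := by
    rw [ht]; field_simp; ring
  rw [hval] at key2
  have hc0 : ‖c‖ ^ 2 ≤ 0 := by
    by_contra hpos
    push_neg at hpos
    have h2S : 0 < 1 / (2 * S) := by positivity
    nlinarith [mul_pos h2S hpos]
  have : ‖c‖ = 0 := by
    nlinarith [norm_nonneg c, sq_nonneg ‖c‖]
  have := norm_eq_zero.mp this
  rw [hc] at this
  exact this

/-- The FTRL-Proximal iterates (without regularization) coincide with the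
online gradient descent iterates. -/
theorem ftrl_proximal_eq_ogd (N K : ℕ) (hN : 1 ≤ N) (hK : 1 ≤ K)
    (g : ℕ → EuclideanSpace ℝ (Fin N)) (σ : ℕ → ℝ)
    (hσ : ∀ k ∈ Finset.Icc 1 K, 0 < σ k)
    (η : ℕ → ℝ)
    (hη : ∀ k ∈ Finset.Icc 1 K, η k = 1 / ∑ k' ∈ Finset.Icc 1 k, σ k')
    (w : ℕ → EuclideanSpace ℝ (Fin N))
    (hmin : ∀ k ∈ Finset.Icc 1 K, ∀ v : EuclideanSpace ℝ (Fin N),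
      (inner ℝ (∑ k' ∈ Finset.Icc 1 k, g k') (w (k + 1)) : ℝ)
          + (1 / 2) * ∑ k' ∈ Finset.Icc 1 k, σ k' * ‖w (k + 1) - w k'‖ ^ 2
        ≤ (inner ℝ (∑ k' ∈ Finset.Icc 1 k, g k') v : ℝ)
          + (1 / 2) * ∑ k' ∈ Finset.Icc 1 k, σ k' * ‖v - w k'‖ ^ 2) :
    ∀ k ∈ Finset.Icc 1 K, w (k + 1) = w k - η k • g k := by
  -- positivity of partial sums
  have hSpos : ∀ k ∈ Finset.Icc 1 K, 0 < ∑ k' ∈ Finset.Icc 1 k, σ k' := by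
    intro k hk
    rw [Finset.mem_Icc] at hk
    apply Finset.sum_pos
    · intro i hi
      rw [Finset.mem_Icc] at hi
      exact hσ i (Finset.mem_Icc.mpr ⟨hi.1, le_trans hi.2 hk.2⟩)
    · exact ⟨1, Finset.mem_Icc.mpr ⟨le_refl 1, hk.1⟩⟩
  -- the closed-form recursion: S_k • w (k+1) = ∑ σ' • w' - ∑ g'
  have hP : ∀ k ∈ Finset.Icc 1 K,
      (∑ k' ∈ Finset.Icc 1 k, σ k') • w (k + 1)
        = (∑ k' ∈ Finset.Icc 1 k, σ k' • w k') - ∑ k' ∈ Finset.Icc 1 k, g k' := by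
    intro k hk
    have hst := stationary (Finset.Icc 1 k) g σ (hSpos k hk) (w (k + 1)) w (hmin k hk)
    have hexp : (∑ k' ∈ Finset.Icc 1 k, σ k' • (w (k + 1) - w k'))
        = (∑ k' ∈ Finset.Icc 1 k, σ k') • w (k + 1)
          - ∑ k' ∈ Finset.Icc 1 k, σ k' • w k' := by
      rw [Finset.sum_smul, ← Finset.sum_sub_distrib]
      exact Finset.sum_congr rfl fun i _ => smul_sub _ _ _
    rw [hexp] at hst
    have := eq_neg_of_add_eq_zero_right hst   -- wrong direction; fix below
    -- directly solve
    have h2 : (∑ k' ∈ Finset.Icc 1 k, σ k') • w (k + 1)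
        = (∑ k' ∈ Finset.Icc 1 k, σ k' • w k') - ∑ k' ∈ Finset.Icc 1 k, g k' := by
      have := hst
      abel_nf at this ⊢
      linear_combination (norm := abel_nf) this
    exact h2
  -- extended: also holds trivially for k = 0 form
  have hP' : ∀ k ∈ Finset.Icc 1 K,
      (∑ k' ∈ Finset.Icc 1 k, σ k') • w (k + 1)
        = (∑ k' ∈ Finset.Icc 1 k, σ k') • w k - g k := by
    intro k hk
    rw [Finset.mem_Icc] at hk
    obtain ⟨j, rfl⟩ : ∃ j, k = j + 1 := ⟨k - 1, (Nat.succ_pred_eq_of_pos hk.1).symm⟩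
    have hPk := hP (j + 1) (Finset.mem_Icc.mpr hk)
    have hprev : (∑ k' ∈ Finset.Icc 1 j, σ k') • w (j + 1)
        = (∑ k' ∈ Finset.Icc 1 j, σ k' • w k') - ∑ k' ∈ Finset.Icc 1 j, g k' := by
      rcases Nat.eq_zero_or_pos j with hj | hj
      · subst hj; simp
      · exact hP j (Finset.mem_Icc.mpr ⟨hj, le_trans (Nat.le_succ j) hk.2⟩)
    have hsplit : ∀ f : ℕ → EuclideanSpace ℝ (Fin N),
        ∑ k' ∈ Finset.Icc 1 (j + 1), f k' = (∑ k' ∈ Finset.Icc 1 j, f k') + f (j + 1) :=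
      fun f => Finset.sum_Icc_succ_top (Nat.le_add_left 1 j) f
    have hsplitR : ∑ k' ∈ Finset.Icc 1 (j + 1), σ k'
        = (∑ k' ∈ Finset.Icc 1 j, σ k') + σ (j + 1) :=
      Finset.sum_Icc_succ_top (Nat.le_add_left 1 j) σ
    rw [hsplit g, hsplit (fun k' => σ k' • w k'), hsplitR, add_smul] at hPk
    rw [hsplitR, add_smul, add_smul]
    have hprev' : (∑ k' ∈ Finset.Icc 1 j, σ k' • w k')
        = (∑ k' ∈ Finset.Icc 1 j, σ k') • w (j + 1) + ∑ k' ∈ Finset.Icc 1 j, g k' := by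
      rw [hprev]; abel
    rw [hprev'] at hPk
    rw [hPk]; abel
  -- conclude
  intro k hk
  have hS := hSpos k hk
  have hQ := hP' k hk
  rw [hη k hk]
  have hSne : (∑ k' ∈ Finset.Icc 1 k, σ k') ≠ 0 := ne_of_gt hS
  have heq : (∑ k' ∈ Finset.Icc 1 k, σ k') • w (k + 1)
      = (∑ k' ∈ Finset.Icc 1 k, σ k')
          • (w k - (1 / ∑ k' ∈ Finset.Icc 1 k, σ k') • g k) := by
    rw [smul_sub, smul_smul, mul_one_div, div_self hSne, one_smul, hQ]
  exact smul_right_injective _ hSne heq
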